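/- Monotony of the product: for all intervals X₁, X₂, Z (pairs of reals with first coordinate ≤ second), if φ(X₁) ⪯ φ(X₂) then m(φ(X₁), φ(Z)) ⪯ m(φ(X₂), φ(Z)). -/

import Mathlib

/-- The product of the algebra `A₄` on `ℝ⁴`. -/
def m (x y : ℝ × ℝ × ℝ × ℝ) : ℝ × ℝ × ℝ × ℝ :=
  (x.1 * y.1 + x.2.2.2 * y.2.2.2,
   x.2.1 * y.2.1 + x.2.2.1 * y.2.2.1,
   x.2.2.1 * y.2.1 + x.2.1 * y.2.2.1,
   x.2.2.2 * y.1 + x.1 * y.2.2.2)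

/-- The embedding `φ` of the interval `[x₁, x₂]` into `A₄ = ℝ⁴`. -/
noncomputable def phi (x₁ x₂ : ℝ) : ℝ × ℝ × ℝ × ℝ :=
  if 0 ≤ x₁ then (x₁, x₂, 0, 0)
  else if 0 ≤ x₂ then (0, x₂, -x₁, 0)
  else (0, 0, -x₁, -x₂)

/-- The partial order relation `⪯` on `A₄` defined clause by clause:
`(x₁, x₂, 0, 0) ⪯ (y₁, y₂, 0, 0)` iff `y₁ ≤ x₁` and `x₂ ≤ y₂`;
`(x₁, x₂, 0, 0) ⪯ (0, y₂, y₃, 0)` iff `x₂ ≤ y₂`;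
`(0, x₂, x₃, 0) ⪯ (0, y₂, y₃, 0)` iff `x₂ ≤ y₂` and `x₃ ≤ y₃`;
`(0, 0, x₃, x₄) ⪯ (0, y₂, y₃, 0)` iff `x₃ ≤ y₃`;
`(0, 0, x₃, x₄) ⪯ (0, 0, y₃, y₄)` iff `x₃ ≤ y₃` and `y₄ ≤ x₄`;
and no other pairs are related. -/
def prec (x y : ℝ × ℝ × ℝ × ℝ) : Prop :=
  (∃ x₁ x₂ y₁ y₂ : ℝ, x = (x₁, x₂, 0, 0) ∧ y = (y₁, y₂, 0, 0) ∧ y₁ ≤ x₁ ∧ x₂ ≤ y₂) ∨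
  (∃ x₁ x₂ y₂ y₃ : ℝ, x = (x₁, x₂, 0, 0) ∧ y = (0, y₂, y₃, 0) ∧ x₂ ≤ y₂) ∨
  (∃ x₂ x₃ y₂ y₃ : ℝ, x = (0, x₂, x₃, 0) ∧ y = (0, y₂, y₃, 0) ∧ x₂ ≤ y₂ ∧ x₃ ≤ y₃) ∨
  (∃ x₃ x₄ y₂ y₃ : ℝ, x = (0, 0, x₃, x₄) ∧ y = (0, y₂, y₃, 0) ∧ x₃ ≤ y₃) ∨
  (∃ x₃ x₄ y₃ y₄ : ℝ, x = (0, 0, x₃, x₄) ∧ y = (0, 0, y₃, y₄) ∧ x₃ ≤ y₃ ∧ y₄ ≤ x₄)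


lemma prec_phi_iff {a b c d : ℝ} (h₁ : a ≤ b) (h₂ : c ≤ d)
    (h : prec (phi a b) (phi c d)) : c ≤ a ∧ b ≤ d := by
  unfold phi at h
  split_ifs at h <;>
  · simp only [prec, Prod.mk.injEq] at h
    try push_neg at *
    casesm* _ ∨ _, _ ∧ _, Exists _
    all_goals subst_vars
    all_goals constructor <;> linarith

theorem stmt13 (X₁ X₂ Z : ℝ × ℝ) (h₁ : X₁.1 ≤ X₁.2) (h₂ : X₂.1 ≤ X₂.2)
    (hZ : Z.1 ≤ Z.2) (h : prec (phi X₁.1 X₁.2) (phi X₂.1 X₂.2)) :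
    prec (m (phi X₁.1 X₁.2) (phi Z.1 Z.2)) (m (phi X₂.1 X₂.2) (phi Z.1 Z.2)) := by
  obtain ⟨a, b⟩ := X₁
  obtain ⟨c, d⟩ := X₂
  obtain ⟨p, q⟩ := Z
  dsimp only at h₁ h₂ hZ h ⊢
  obtain ⟨hca, hbd⟩ := prec_phi_iff h₁ h₂ h
  clear h
  unfold phi
  split_ifs <;>
  · try push_neg at *
    simp only [prec, m, Prod.mk.injEq, mul_zero, zero_mul, add_zero, zero_add,
      mul_neg, neg_mul, neg_zero, neg_neg, true_and, and_true]
    first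
    | (exfalso; linarith)
    | (refine Or.inl ⟨_,_,_,_, ⟨rfl,rfl⟩, ⟨rfl,rfl⟩, ?_, ?_⟩ <;> nlinarith)
    | (refine Or.inr (Or.inl ⟨_,_,_,_, ⟨rfl,rfl⟩, ⟨rfl,rfl⟩, ?_⟩) <;> nlinarith)
    | (refine Or.inr (Or.inr (Or.inl ⟨_,_,_,_, ⟨rfl,rfl⟩, ⟨rfl,rfl⟩, ?_, ?_⟩)) <;> nlinarith)
    | (refine Or.inr (Or.inr (Or.inr (Or.inl ⟨_,_,_,_, ⟨rfl,rfl⟩, ⟨rfl,rfl⟩, ?_⟩))) <;> nlinarith)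
    | (refine Or.inr (Or.inr (Or.inr (Or.inr ⟨_,_,_,_, ⟨rfl,rfl⟩, ⟨rfl,rfl⟩, ?_, ?_⟩))) <;> nlinarith)
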